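/- arXiv:math-ph/0212078 — 2 statements merged into one kernel-verified Lean document; each statement's English description precedes it below -/
import Mathlib

section
/- Let α > 2, β > 0, and α/(α-2) < γ < 3α/(α-2), and set η = 3αγ/(2γ+α). Then 3 < η, and the function x ↦ 1 - exp(-u(x)) is integrable over ℝ³, where u(x) = g·(|x⊥|^{2α/β} + |x₃|^{2γ/β})^{-β/2} and g > 0. -/
open MeasureTheory Real Filter

/-- The anisotropic model potential `u(x) = g (|x⊥|^{2α/β} + |x₃|^{2γ/β})^{-β/2}`. -/
noncomputable def uFun (g α β γ : ℝ) (x : EuclideanSpace ℝ (Fin 3)) : ℝ :=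
  g * (Real.sqrt ((x 0) ^ 2 + (x 1) ^ 2) ^ (2 * α / β) + |x 2| ^ (2 * γ / β)) ^ (-(β / 2))


lemma int1d {p : ℝ} (hp : 1 < p) : Integrable (fun s : ℝ => max 1 |s| ^ (-p)) := by
  have hfin : ((Module.finrank ℝ ℝ : ℕ) : ℝ) < p := by
    rw [Module.finrank_self]; exact_mod_cast hp
  refine ((integrable_one_add_norm (μ := volume) hfin).const_mul ((2:ℝ) ^ p)).mono' ?_ ?_
  · exact (by fun_prop : Measurable fun s : ℝ => max 1 |s| ^ (-p)).aestronglyMeasurable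
  · filter_upwards with s
    have hm1 : (1:ℝ) ≤ max 1 |s| := le_max_left _ _
    have hm0 : (0:ℝ) < max 1 |s| := lt_of_lt_of_le one_pos hm1
    rw [Real.norm_eq_abs, abs_of_nonneg (Real.rpow_nonneg hm0.le _)]
    have h2 : 1 + ‖s‖ ≤ 2 * max 1 |s| := by
      rw [Real.norm_eq_abs]
      have := le_max_right (1:ℝ) |s|
      linarith
    calc max 1 |s| ^ (-p) = 2 ^ p * (2 * max 1 |s|) ^ (-p) := by
          rw [Real.mul_rpow (by norm_num) hm0.le, ← mul_assoc, ← Real.rpow_add two_pos,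
            add_neg_cancel, Real.rpow_zero, one_mul]
      _ ≤ 2 ^ p * (1 + ‖s‖) ^ (-p) := by
          refine mul_le_mul_of_nonneg_left ?_ (by positivity)
          exact Real.rpow_le_rpow_of_nonpos (by positivity) h2 (by linarith)

lemma domIntegrable (p : Fin 3 → ℝ) (hp : ∀ i, 1 < p i) :
    Integrable (fun x : EuclideanSpace ℝ (Fin 3) => ∏ i, max 1 |x i| ^ (-(p i))) := by
  have hpi : Integrable (fun y : Fin 3 → ℝ => ∏ i, max 1 |y i| ^ (-(p i))) :=
    Integrable.fintype_prod (fun i => int1d (hp i))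
  exact ((EuclideanSpace.volume_preserving_symm_measurableEquiv_toLp (Fin 3)).integrable_comp_emb
    (MeasurableEquiv.measurableEmbedding _)).mpr hpi


lemma pointwise_bound (g α β γ t : ℝ) (hg : 0 < g) (hα : 0 < α) (hβ : 0 < β) (hγ : 0 < γ)
    (ht0 : 0 ≤ t) (ht1 : t ≤ 1) (x : EuclideanSpace ℝ (Fin 3)) :
    ‖1 - Real.exp (-(uFun g α β γ x))‖ ≤
      max 1 g * (max 1 |x 0| ^ (-(α * (t/2))) * max 1 |x 1| ^ (-(α * (t/2))) *
        max 1 |x 2| ^ (-(γ * (1 - t)))) := by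
  set s := Real.sqrt ((x 0) ^ 2 + (x 1) ^ 2) with hs
  have hs0 : 0 ≤ s := Real.sqrt_nonneg _
  set a := s ^ (2 * α / β) with ha
  set b := |x 2| ^ (2 * γ / β) with hb
  have ha0 : 0 ≤ a := Real.rpow_nonneg hs0 _
  have hb0 : 0 ≤ b := Real.rpow_nonneg (abs_nonneg _) _
  have hbase : 0 ≤ a + b := by linarith
  set ρ := (a + b) ^ (β / 2) with hρ
  have hρ0 : 0 ≤ ρ := Real.rpow_nonneg hbase _
  set M := max 1 ρ with hM
  have hM1 : (1:ℝ) ≤ M := le_max_left _ _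
  have hMpos : (0:ℝ) < M := lt_of_lt_of_le one_pos hM1
  have hu0 : 0 ≤ uFun g α β γ x := mul_nonneg hg.le (Real.rpow_nonneg hbase _)
  -- coordinate bounds
  have hxs : |x 0| ≤ s ∧ |x 1| ≤ s := by
    constructor <;>
    · rw [hs, ← Real.sqrt_sq_eq_abs]
      exact Real.sqrt_le_sqrt (by nlinarith [sq_nonneg (x 0), sq_nonneg (x 1)])
  have hexp1 : (2 * α / β) * (β / 2) = α := by field_simp
  have hexp2 : (2 * γ / β) * (β / 2) = γ := by field_simp
  have hsρ : s ^ α ≤ ρ := by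
    have : s ^ α = a ^ (β / 2) := by
      rw [ha, ← Real.rpow_mul hs0, hexp1]
    rw [this, hρ]
    exact Real.rpow_le_rpow ha0 (by linarith) (by positivity)
  have hx0 : |x 0| ^ α ≤ ρ :=
    le_trans (Real.rpow_le_rpow (abs_nonneg _) hxs.1 hα.le) hsρ
  have hx1 : |x 1| ^ α ≤ ρ :=
    le_trans (Real.rpow_le_rpow (abs_nonneg _) hxs.2 hα.le) hsρ
  have hx2 : |x 2| ^ γ ≤ ρ := by
    have : |x 2| ^ γ = b ^ (β / 2) := by
      rw [hb, ← Real.rpow_mul (abs_nonneg _), hexp2]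
    rw [this, hρ]
    exact Real.rpow_le_rpow hb0 (by linarith) (by positivity)
  -- max bounds
  have hmax : ∀ c e : ℝ, 0 < e → |c| ^ e ≤ ρ → max 1 |c| ^ e ≤ M := by
    intro c e he hc
    rcases le_total |c| 1 with h | h
    · rw [max_eq_left h, Real.one_rpow]; exact hM1
    · rw [max_eq_right h]; exact le_trans hc (le_max_right _ _)
  -- the product P
  set P := max 1 |x 0| ^ (α * (t/2)) * max 1 |x 1| ^ (α * (t/2)) * max 1 |x 2| ^ (γ * (1 - t))
    with hP
  have hm0pos : (0:ℝ) < max 1 |x 0| := lt_of_lt_of_le one_pos (le_max_left _ _)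
  have hm1pos : (0:ℝ) < max 1 |x 1| := lt_of_lt_of_le one_pos (le_max_left _ _)
  have hm2pos : (0:ℝ) < max 1 |x 2| := lt_of_lt_of_le one_pos (le_max_left _ _)
  have hPpos : 0 < P := by
    rw [hP]; positivity
  have hPM : P ≤ M := by
    have h0 : max 1 |x 0| ^ (α * (t/2)) ≤ M ^ (t/2) := by
      rw [Real.rpow_mul hm0pos.le]
      exact Real.rpow_le_rpow (Real.rpow_nonneg hm0pos.le _)
        (hmax _ _ hα hx0) (by linarith)
    have h1 : max 1 |x 1| ^ (α * (t/2)) ≤ M ^ (t/2) := by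
      rw [Real.rpow_mul hm1pos.le]
      exact Real.rpow_le_rpow (Real.rpow_nonneg hm1pos.le _)
        (hmax _ _ hα hx1) (by linarith)
    have h2 : max 1 |x 2| ^ (γ * (1 - t)) ≤ M ^ (1 - t) := by
      rw [Real.rpow_mul hm2pos.le]
      exact Real.rpow_le_rpow (Real.rpow_nonneg hm2pos.le _)
        (hmax _ _ hγ hx2) (by linarith)
    calc P ≤ M ^ (t/2) * M ^ (t/2) * M ^ (1 - t) := by
          rw [hP]
          gcongr <;> positivity
      _ = M ^ (t/2 + t/2 + (1 - t)) := by
          rw [Real.rpow_add hMpos, Real.rpow_add hMpos]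
      _ = M := by norm_num
  -- norm bound
  have hnorm : ‖1 - Real.exp (-(uFun g α β γ x))‖ = 1 - Real.exp (-(uFun g α β γ x)) := by
    rw [Real.norm_eq_abs, abs_of_nonneg]
    have : Real.exp (-(uFun g α β γ x)) ≤ 1 := Real.exp_le_one_iff.mpr (by linarith)
    linarith
  have hCM : 1 - Real.exp (-(uFun g α β γ x)) ≤ max 1 g / M := by
    rcases eq_or_lt_of_le hbase with h0 | h0
    · have hu : uFun g α β γ x = 0 := by
        rw [uFun, ← ha, ← hb, ← h0, Real.zero_rpow (neg_ne_zero.mpr (by positivity))]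
        ring
      rw [hu, neg_zero, Real.exp_zero, sub_self]
      exact div_nonneg (le_trans zero_le_one (le_max_left _ _)) hMpos.le
    · have hρpos : 0 < ρ := Real.rpow_pos_of_pos h0 _
      have hu : uFun g α β γ x = g / ρ := by
        rw [uFun, ← ha, ← hb, Real.rpow_neg hbase]; ring
      rcases le_total ρ 1 with h | h
      · rw [hM, max_eq_left h]
        have : Real.exp (-(uFun g α β γ x)) ≥ 0 := (Real.exp_pos _).le
        calc 1 - Real.exp (-(uFun g α β γ x)) ≤ 1 := by linarith
          _ ≤ max 1 g / 1 := by rw [div_one]; exact le_max_left _ _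
      · rw [hM, max_eq_right h]
        have h1 : 1 - Real.exp (-(uFun g α β γ x)) ≤ uFun g α β γ x := by
          have := Real.add_one_le_exp (-(uFun g α β γ x))
          linarith
        calc 1 - Real.exp (-(uFun g α β γ x)) ≤ g / ρ := by rw [← hu]; exact h1
          _ ≤ max 1 g / ρ := by gcongr; exact le_max_right _ _
  rw [hnorm]
  calc 1 - Real.exp (-(uFun g α β γ x)) ≤ max 1 g / M := hCM
    _ ≤ max 1 g / P := div_le_div_of_nonneg_left (le_trans zero_le_one (le_max_left _ _)) hPpos hPM
    _ = max 1 g * (max 1 |x 0| ^ (-(α * (t/2))) * max 1 |x 1| ^ (-(α * (t/2))) *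
        max 1 |x 2| ^ (-(γ * (1 - t)))) := by
        rw [hP, Real.rpow_neg hm0pos.le, Real.rpow_neg hm1pos.le, Real.rpow_neg hm2pos.le]
        ring

/-- If `α > 2`, `β > 0` and `α/(α-2) < γ < 3α/(α-2)` then `η := 3αγ/(2γ+α) > 3` and
`x ↦ 1 - exp(-u(x))` is integrable over `ℝ³`. -/
theorem eta_gt_three_and_integrable (g α β γ : ℝ) (hg : 0 < g) (hα : 2 < α) (hβ : 0 < β)
    (hγ₁ : α / (α - 2) < γ) (hγ₂ : γ < 3 * α / (α - 2)) :
    3 < 3 * α * γ / (2 * γ + α) ∧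
      Integrable (fun x : EuclideanSpace ℝ (Fin 3) => 1 - Real.exp (-(uFun g α β γ x))) := by
  have hα2 : 0 < α - 2 := by linarith
  have hα0 : 0 < α := by linarith
  have hγ0 : 0 < γ := lt_trans (div_pos hα0 hα2) hγ₁
  have hkey : α + 2 * γ < α * γ := by
    have := (div_lt_iff₀ hα2).mp hγ₁
    nlinarith
  constructor
  · rw [lt_div_iff₀ (by linarith : (0:ℝ) < 2 * γ + α)]
    nlinarith
  · set t := (2/α + (1 - 1/γ))/2 with htdef
    have h0 : 2/α + 1/γ < 1 := by
      rw [div_add_div _ _ hα0.ne' hγ0.ne', div_lt_one (by positivity)]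
      nlinarith
    have hγinv : (0:ℝ) < 1/γ := by positivity
    have hαinv : (0:ℝ) < 2/α := by positivity
    have ht2 : 2/α < t := by rw [htdef]; linarith
    have ht3 : t < 1 - 1/γ := by rw [htdef]; linarith
    have ht0 : 0 < t := lt_trans hαinv ht2
    have ht1 : t < 1 := by linarith
    have e1 : α * (2/α) = 2 := by field_simp
    have e2 : γ * (1/γ) = 1 := by field_simp
    have hp0 : 1 < α * (t/2) := by nlinarith [mul_lt_mul_of_pos_left ht2 hα0]
    have hp2 : 1 < γ * (1 - t) := by nlinarith [mul_lt_mul_of_pos_left ht3 hγ0]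
    set p : Fin 3 → ℝ := ![α * (t/2), α * (t/2), γ * (1 - t)] with hpdef
    have hdom : Integrable (fun x : EuclideanSpace ℝ (Fin 3) => ∏ i, max 1 |x i| ^ (-(p i))) :=
      domIntegrable p (by
        intro i
        fin_cases i <;> simpa [hpdef] using (by first | exact hp0 | exact hp2 : _))
    refine (hdom.const_mul (max 1 g)).mono' ?_ ?_
    · have : Measurable (fun x : EuclideanSpace ℝ (Fin 3) =>
          1 - Real.exp (-(uFun g α β γ x))) := by
        unfold uFun; fun_prop
      exact this.aestronglyMeasurable
    · filter_upwards with x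
      have h := pointwise_bound g α β γ t hg hα0 hβ hγ0 ht0.le ht1.le x
      calc ‖1 - Real.exp (-(uFun g α β γ x))‖ ≤ _ := h
        _ = max 1 g * ∏ i, max 1 |x i| ^ (-(p i)) := by
            rw [Fin.prod_univ_three]
            simp [hpdef]
end

section
/- For g > 0 and α > 1, ∫_ℝ (1 - exp(-g·|t|^{-α})) dt = 2·g^{1/α}·Γ(1 - 1/α). -/
open MeasureTheory Real Filter Set Topology

lemma one_sub_exp_neg_le' (y : ℝ) : 1 - Real.exp (-y) ≤ y := by
  have := Real.add_one_le_exp (-y)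
  linarith

lemma one_sub_exp_neg_nonneg' {y : ℝ} (hy : 0 ≤ y) : 0 ≤ 1 - Real.exp (-y) := by
  have : Real.exp (-y) ≤ 1 := Real.exp_le_one_iff.mpr (by linarith)
  linarith

/-- One-dimensional analogue: `∫_ℝ (1 - e^{-g |t|^{-α}}) dt = 2 g^{1/α} Γ(1 - 1/α)`. -/
theorem integral_one_sub_exp_one_dim (g α : ℝ) (hg : 0 < g) (hα : 1 < α) :
    ∫ t : ℝ, (1 - Real.exp (-(g * |t| ^ (-α)))) = 2 * g ^ (1 / α) * Real.Gamma (1 - 1 / α) := by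
  have hα0 : (0:ℝ) < α := lt_trans one_pos hα
  set f : ℝ → ℝ := fun t => 1 - Real.exp (-(g * t ^ (-α))) with hfdef
  set h : ℝ → ℝ := fun t => t ^ (-α) * Real.exp (-(g * t ^ (-α))) with hhdef
  have hfm : Measurable f := by
    fun_prop
  have hhm : Measurable h := by
    fun_prop
  -- bounds on f
  have hf_nonneg : ∀ t : ℝ, 0 ≤ t → 0 ≤ f t := by
    intro t ht
    exact one_sub_exp_neg_nonneg' (by positivity)
  have hf_le_one : ∀ t : ℝ, f t ≤ 1 := by
    intro t
    have : 0 ≤ Real.exp (-(g * t ^ (-α))) := (Real.exp_pos _).le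
    simp only [hfdef]; linarith
  have hf_le : ∀ t : ℝ, f t ≤ g * t ^ (-α) := fun t => one_sub_exp_neg_le' _
  -- integrability of f on Ioi 0
  have hf_int : IntegrableOn f (Ioi 0) := by
    have h1 : IntegrableOn f (Ioc 0 1) := by
      apply Measure.integrableOn_of_bounded (M := 1) (by simp) hfm.aestronglyMeasurable
      filter_upwards [ae_restrict_mem measurableSet_Ioc] with t ht
      rw [Real.norm_eq_abs, abs_le]
      exact ⟨by linarith [hf_nonneg t ht.1.le], hf_le_one t⟩
    have h2 : IntegrableOn f (Ioi 1) := by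
      apply Integrable.mono' ((integrableOn_Ioi_rpow_of_lt (by linarith : -α < -1)
        one_pos).const_mul g) hfm.aestronglyMeasurable
      filter_upwards [ae_restrict_mem measurableSet_Ioi] with t ht
      rw [Real.norm_eq_abs, abs_le]
      have ht0 : (0:ℝ) < t := lt_trans one_pos ht
      constructor
      · have : 0 ≤ g * t ^ (-α) := by positivity
        linarith [hf_nonneg t ht0.le]
      · exact hf_le t
    have : Ioc (0:ℝ) 1 ∪ Ioi 1 = Ioi 0 := Ioc_union_Ioi_eq_Ioi one_pos.le
    rw [← this]
    exact h1.union h2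
  -- integrability of h on Ioi 0
  have hh_int : IntegrableOn h (Ioi 0) := by
    rw [← integrableOn_Ioi_comp_rpow_iff' h (p := -1) (by norm_num)]
    have := integrableOn_rpow_mul_exp_neg_mul_rpow (p := α) (s := α - 2) (b := g)
      (by linarith) hα0 hg
    apply this.congr_fun _ measurableSet_Ioi
    intro x hx
    have hx0 : (0:ℝ) < x := hx
    have hxi : (x ^ (-1:ℝ)) ^ (-α) = x ^ α := by
      rw [← Real.rpow_mul hx0.le]; norm_num
    simp only [hhdef, smul_eq_mul, hxi]
    rw [show (-1:ℝ) - 1 = -2 by norm_num,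
      show x ^ (α - 2) = x ^ (-2:ℝ) * x ^ α by rw [← Real.rpow_add hx0]; ring_nf,
      neg_mul g]
    ring
  -- value of ∫ h
  have hh_val : ∫ t in Ioi (0:ℝ), h t = g ^ (-(α - 1) / α) * (1 / α) * Real.Gamma ((α - 1) / α) := by
    rw [← integral_comp_rpow_Ioi h (p := -1) (by norm_num)]
    have : ∀ x ∈ Ioi (0:ℝ), (|(-1:ℝ)| * x ^ ((-1:ℝ) - 1)) • h (x ^ (-1:ℝ))
        = x ^ (α - 2) * Real.exp (-g * x ^ α) := by
      intro x hx
      have hx0 : (0:ℝ) < x := hx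
      have hxi : (x ^ (-1:ℝ)) ^ (-α) = x ^ α := by
        rw [← Real.rpow_mul hx0.le]; norm_num
      simp only [hhdef, smul_eq_mul, hxi, abs_neg, abs_one, one_mul]
      rw [show (-1:ℝ) - 1 = -2 by norm_num]
      rw [show x ^ (α - 2) = x ^ (-2:ℝ) * x ^ α by rw [← Real.rpow_add hx0]; ring_nf]
      rw [neg_mul g]
      ring
    rw [setIntegral_congr_fun measurableSet_Ioi this]
    have := integral_rpow_mul_exp_neg_mul_rpow (p := α) (q := α - 2) (b := g)
      hα0 (by linarith) hg
    rw [this, show α - 2 + 1 = α - 1 by ring]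
  -- integration by parts
  have key : ∫ t in Ioi (0:ℝ), f t = g * α * ∫ t in Ioi (0:ℝ), h t := by
    set F : ℝ → ℝ := fun t => t * f t with hFdef
    have hF0 : F 0 = 0 := by simp [hFdef]
    have hderiv : ∀ x ∈ Ioi (0:ℝ), HasDerivAt F (f x - g * α * h x) x := by
      intro x hx
      have hx0 : (0:ℝ) < x := hx
      have d1 : HasDerivAt (fun t : ℝ => t ^ (-α)) (-α * x ^ (-α - 1)) x :=
        Real.hasDerivAt_rpow_const (Or.inl hx0.ne')
      have d2 : HasDerivAt (fun t : ℝ => -(g * t ^ (-α)))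
          (-(g * (-α * x ^ (-α - 1)))) x := (d1.const_mul g).neg
      have d3 : HasDerivAt (fun t : ℝ => Real.exp (-(g * t ^ (-α))))
          (Real.exp (-(g * x ^ (-α))) * (-(g * (-α * x ^ (-α - 1))))) x := d2.exp
      have d4 : HasDerivAt f
          (-(Real.exp (-(g * x ^ (-α))) * (-(g * (-α * x ^ (-α - 1)))))) x :=
        (d3.const_sub 1)
      have d5 : HasDerivAt F
          (1 * f x + x * (-(Real.exp (-(g * x ^ (-α))) * (-(g * (-α * x ^ (-α - 1))))))) x :=
        (hasDerivAt_id x).mul d4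
      convert d5 using 1
      have hxx : x * x ^ (-α - 1) = x ^ (-α) := by
        rw [show -α - 1 = -α + (-1) by ring, Real.rpow_add hx0, Real.rpow_neg_one]
        field_simp
      simp only [hhdef, one_mul]
      rw [show x * -(Real.exp (-(g * x ^ (-α))) * -(g * (-α * x ^ (-α - 1))))
          = -(g * α) * (x * x ^ (-α - 1)) * Real.exp (-(g * x ^ (-α))) by ring, hxx]
      ring
    have hcont : ContinuousWithinAt F (Ici 0) 0 := by
      rw [ContinuousWithinAt, hF0]
      apply squeeze_zero' (g := fun t : ℝ => t)
      · filter_upwards [eventually_mem_nhdsWithin] with t ht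
        exact mul_nonneg ht (hf_nonneg t ht)
      · filter_upwards [eventually_mem_nhdsWithin] with t (ht : t ∈ Ici (0:ℝ))
        calc t * f t ≤ t * 1 := mul_le_mul_of_nonneg_left (hf_le_one t) ht
          _ = t := mul_one t
      · exact (continuous_id.tendsto 0).mono_left nhdsWithin_le_nhds
    have htop : Tendsto F atTop (𝓝 0) := by
      apply squeeze_zero' (g := fun t : ℝ => g * t ^ (1 - α))
      · filter_upwards [eventually_ge_atTop (0:ℝ)] with t ht
        exact mul_nonneg ht (hf_nonneg t ht)
      · filter_upwards [eventually_gt_atTop (0:ℝ)] with t ht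
        calc t * f t ≤ t * (g * t ^ (-α)) :=
              mul_le_mul_of_nonneg_left (hf_le t) ht.le
          _ = g * t ^ (1 - α) := by
              rw [show (1:ℝ) - α = 1 + (-α) by ring, Real.rpow_add ht, Real.rpow_one]; ring
      · have : Tendsto (fun t : ℝ => t ^ (-(α - 1))) atTop (𝓝 0) :=
          tendsto_rpow_neg_atTop (by linarith)
        have h2 := this.const_mul g
        rw [mul_zero] at h2
        convert h2 using 2 with t
        ring_nf
    have hint' : IntegrableOn (fun x => f x - g * α * h x) (Ioi 0) :=
      hf_int.sub (hh_int.const_mul (g * α))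
    have ibp := integral_Ioi_of_hasDerivAt_of_tendsto hcont hderiv hint' htop
    rw [hF0, sub_zero] at ibp
    rw [integral_sub hf_int (hh_int.const_mul (g * α)), integral_const_mul] at ibp
    linarith
  -- assemble
  have habs : (∫ t : ℝ, (1 - Real.exp (-(g * |t| ^ (-α))))) = 2 * ∫ t in Ioi (0:ℝ), f t := by
    exact integral_comp_abs (f := f)
  rw [habs, key, hh_val]
  have hexp : g * g ^ (-(α - 1) / α) = g ^ (1 / α) := by
    rw [show g * g ^ (-(α - 1) / α) = g ^ (1:ℝ) * g ^ (-(α - 1) / α) by rw [Real.rpow_one],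
      ← Real.rpow_add hg]
    congr 1
    field_simp
    ring
  have hGamma : (α - 1) / α = 1 - 1 / α := by field_simp
  rw [hGamma]
  rw [show g * α * (g ^ (-(α - 1) / α) * (1 / α) * Real.Gamma (1 - 1 / α))
      = (g * g ^ (-(α - 1) / α)) * (α * (1 / α)) * Real.Gamma (1 - 1 / α) by ring,
    hexp, mul_one_div_cancel hα0.ne']
  ring
end
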